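/- (Optimization rule 4 is support-preserving) For any x : Gen α, b : Bool not depending on the bound variable, and k : b = true → α → Gen β, the generators x >>= (fun a => assume b (fun h => k h a)) and assume b (fun h => x >>= k h) have the same support: for all c, c ∈ ⟦x >>= (fun a => assume b (fun h => k h a))⟧ ↔ c ∈ ⟦assume b (fun h => x >>= k h)⟧. -/

import Mathlib

namespace PBT

inductive Gen : Type → Type 1 where
  | pure {α : Type} : α → Gen α
  | pick {α : Type} : Gen α → Gen α → Gen α
  | bind {α β : Type} : Gen α → (α → Gen β) → Gen β
  | indexed {α : Type} : (ℕ → Gen (Option α)) → Gen α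
  | assume {α : Type} : (b : Bool) → (b = true → Gen α) → Gen α

instance : Pure Gen := ⟨Gen.pure⟩
instance : Bind Gen := ⟨Gen.bind⟩

def Gen.support : {α : Type} → Gen α → Set α
  | _, .pure a' => {a | a = a'}
  | _, .pick x y => {a | a ∈ x.support ∨ a ∈ y.support}
  | _, .bind x f => {a | ∃ a', a' ∈ x.support ∧ a ∈ (f a').support}
  | _, .indexed f => {a | (∃ n, some a ∈ (f n).support) ∧
      (∀ a' n, some a' ∈ (f n).support → some a' ∈ (f (n + 1)).support)}
  | _, .assume b k => {a | ∃ h : b = true, a ∈ (k h).support}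

notation (priority := high) "⟦" g "⟧" => Gen.support g

theorem opt_rule4_support {α β : Type} (x : Gen α) (b : Bool) (k : b = true → α → Gen β)
    (c : β) :
    c ∈ ⟦x >>= fun a => Gen.assume b (fun h => k h a)⟧ ↔
      c ∈ ⟦Gen.assume b (fun h => x >>= k h)⟧ := by
  show c ∈ ⟦Gen.bind x _⟧ ↔ _
  simp only [Gen.support, Set.mem_setOf_eq]
  change _ ↔ ∃ h : b = true, c ∈ ⟦Gen.bind x (k h)⟧
  simp only [Gen.support, Set.mem_setOf_eq]
  tauto

end PBT
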